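/- (Main theorem, Theorem 1) Let X be the training-membership ground truth valued in {0,1}^D, let Y = f(X) be the model's output (a deterministic function of X, possibly after randomization independent of everything else), and let the attack prediction A satisfy the Markov chain X → Y → A. Let E_α be the indicator that the Hamming distance between X and A exceeds α, and p_α = P(E_α = 1). If D > log₂ V(α) where V(α) = Σ_{j=0}^{α} C(D,j), then p_α ≥ (H(X) − I(X; Y) − 1 − log₂ V(α)) / (D − log₂ V(α)). -/

import Mathlib

open Finset

noncomputable section

open scoped Classical

variable {Ω : Type*}

/-- Probability of the event `A` under the mass function `p` on a finite sample space. -/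
def pr [Fintype Ω] (p : Ω → ℝ) (A : Ω → Prop) : ℝ :=
  ∑ ω, if A ω then p ω else 0

/-- `p` is a probability mass function on the finite sample space `Ω`. -/
def IsPMF [Fintype Ω] (p : Ω → ℝ) : Prop :=
  (∀ ω, 0 ≤ p ω) ∧ ∑ ω, p ω = 1

/-- Shannon entropy (in bits) of the random variable `X` under `p`
(with the convention `0 · log 0 = 0` built into `Real.negMulLog`). -/
def ent [Fintype Ω] (p : Ω → ℝ) {S : Type*} [Fintype S] (X : Ω → S) : ℝ :=
  ∑ s, Real.negMulLog (pr p fun ω => X ω = s) / Real.log 2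

/-- Conditional Shannon entropy `H(X | Y)` (in bits), via the chain rule
`H(X | Y) = H(X, Y) - H(Y)`. -/
def condEnt [Fintype Ω] (p : Ω → ℝ) {S T : Type*} [Fintype S] [Fintype T]
    (X : Ω → S) (Y : Ω → T) : ℝ :=
  ent p (fun ω => (X ω, Y ω)) - ent p Y

/-- Mutual information `I(X ; Y)` (in bits). -/
def mutInf [Fintype Ω] (p : Ω → ℝ) {S T : Type*} [Fintype S] [Fintype T]
    (X : Ω → S) (Y : Ω → T) : ℝ :=
  ent p X + ent p Y - ent p fun ω => (X ω, Y ω)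

/-- The conditional mass function of `p` given the event `A`
(the zero function if `A` has probability zero). -/
def condPMF [Fintype Ω] (p : Ω → ℝ) (A : Ω → Prop) : Ω → ℝ :=
  fun ω => if A ω then p ω / pr p A else 0

/-- `X → Y → A` is a Markov chain: `A` is conditionally independent of `X` given `Y`
(stated in multiplied-out form to avoid division). -/
def MarkovChain [Fintype Ω] (p : Ω → ℝ) {S T U : Type*}
    (X : Ω → S) (Y : Ω → T) (A : Ω → U) : Prop :=
  ∀ (x : S) (y : T) (a : U), 0 < pr p (fun ω => X ω = x ∧ Y ω = y) →
    pr p (fun ω => A ω = a ∧ Y ω = y ∧ X ω = x) * pr p (fun ω => Y ω = y) =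
      pr p (fun ω => A ω = a ∧ Y ω = y) * pr p (fun ω => X ω = x ∧ Y ω = y)

/-- `V(α) = Σ_{j=0}^{α} C(D, j)`, the size of a Hamming ball of radius `α` in `{0,1}^D`. -/
def Vball (D α : ℕ) : ℕ :=
  ∑ j ∈ Finset.range (α + 1), D.choose j

/-- The binary entropy function (in bits). -/
def binEnt (q : ℝ) : ℝ :=
  -(q * Real.logb 2 q) - (1 - q) * Real.logb 2 (1 - q)


section Aux
variable [Fintype Ω] {p : Ω → ℝ}

lemma pr_nonneg (hp : ∀ ω, 0 ≤ p ω) (A : Ω → Prop) : 0 ≤ pr p A :=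
  Finset.sum_nonneg fun ω _ => by by_cases h : A ω <;> simp [h, hp ω]

lemma pr_congr {A B : Ω → Prop} (h : ∀ ω, A ω ↔ B ω) : pr p A = pr p B :=
  Finset.sum_congr rfl fun ω _ => by simp [h ω]

lemma pr_mono (hp : ∀ ω, 0 ≤ p ω) {A B : Ω → Prop} (h : ∀ ω, A ω → B ω) :
    pr p A ≤ pr p B :=
  Finset.sum_le_sum fun ω _ => by
    by_cases hA : A ω
    · simp [hA, h ω hA]
    · by_cases hB : B ω <;> simp [hA, hB, hp ω]

lemma pr_add_compl (hp : ∑ ω, p ω = 1) (A : Ω → Prop) :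
    pr p A + pr p (fun ω => ¬ A ω) = 1 := by
  unfold pr
  rw [← Finset.sum_add_distrib, ← hp]
  refine Finset.sum_congr rfl fun ω _ => ?_
  by_cases h : A ω <;> simp [h]

lemma pr_fiber {S : Type*} [Fintype S] (Z : Ω → S) (B : Ω → Prop) :
    ∑ s, pr p (fun ω => B ω ∧ Z ω = s) = pr p B := by
  unfold pr
  rw [Finset.sum_comm]
  refine Finset.sum_congr rfl fun ω _ => ?_
  by_cases hB : B ω <;> simp [hB, Finset.sum_ite_eq]

lemma sum_pr_mul {S : Type*} [Fintype S] (W : Ω → S) (φ : S → ℝ) :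
    ∑ s, pr p (fun ω => W ω = s) * φ s = ∑ ω, p ω * φ (W ω) := by
  simp_rw [pr, Finset.sum_mul, ite_mul, zero_mul]
  rw [Finset.sum_comm]
  refine Finset.sum_congr rfl fun ω _ => ?_
  simp [Finset.sum_ite_eq]

end Aux

lemma gibbs {ι : Type*} [Fintype ι] (f C : ι → ℝ)
    (hf0 : ∀ i, 0 ≤ f i) (hf1 : ∑ i, f i = 1)
    (hC1 : ∑ i, C i ≤ 1)
    (hpos : ∀ i, 0 < f i → 0 < C i) (hC0 : ∀ i, 0 ≤ C i) :
    ∑ i, Real.negMulLog (f i) ≤ ∑ i, f i * (- Real.log (C i)) := by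
  have key : ∀ i, Real.negMulLog (f i) ≤ f i * (- Real.log (C i)) + (C i - f i) := by
    intro i
    rcases eq_or_lt_of_le (hf0 i) with h | h
    · simp [← h, Real.negMulLog, hC0 i]
    · have hC := hpos i h
      have h1 := Real.log_le_sub_one_of_pos (div_pos hC h)
      rw [Real.log_div (ne_of_gt hC) (ne_of_gt h)] at h1
      have h2 : f i * (C i / f i - 1) = C i - f i := by field_simp
      have h3 := mul_le_mul_of_nonneg_left h1 (le_of_lt h)
      rw [h2] at h3
      unfold Real.negMulLog
      nlinarith
  calc ∑ i, Real.negMulLog (f i)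
      ≤ ∑ i, (f i * (-Real.log (C i)) + (C i - f i)) :=
        Finset.sum_le_sum fun i _ => key i
    _ = ∑ i, f i * (-Real.log (C i)) + (∑ i, C i - ∑ i, f i) := by
        rw [Finset.sum_add_distrib, Finset.sum_sub_distrib]
    _ ≤ _ := by rw [hf1]; linarith

lemma hamming_ball_card {D : ℕ} (a : Fin D → Bool) (α : ℕ) :
    ({x : Fin D → Bool | hammingDist x a ≤ α} : Finset _).card ≤ Vball D α := by
  classical
  set F : (Fin D → Bool) → Finset (Fin D) := fun x => {i | x i ≠ a i} with hF
  have hcard : ∀ x : Fin D → Bool, (F x).card = hammingDist x a := fun x => rfl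
  have hinj : Function.Injective F := by
    intro x x' hxx
    funext i
    have : (x i ≠ a i) ↔ (x' i ≠ a i) := by
      constructor <;> intro h
      · have : i ∈ F x' := hxx ▸ (by simp [hF, h])
        simpa [hF] using this
      · have : i ∈ F x := hxx.symm ▸ (by simp [hF, h])
        simpa [hF] using this
    revert this
    cases x i <;> cases x' i <;> cases a i <;> simp
  have hmaps : ∀ x ∈ ({x : Fin D → Bool | hammingDist x a ≤ α} : Finset _),
      F x ∈ (Finset.range (α+1)).biUnion (fun j => Finset.powersetCard j Finset.univ) := by
    intro x hx
    simp only [Finset.mem_filter, Finset.mem_univ, true_and] at hx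
    simp only [Finset.mem_biUnion, Finset.mem_range]
    exact ⟨(F x).card, by rw [hcard]; omega, by simp [Finset.mem_powersetCard]⟩
  calc ({x : Fin D → Bool | hammingDist x a ≤ α} : Finset _).card
      ≤ ((Finset.range (α+1)).biUnion (fun j => Finset.powersetCard j Finset.univ)).card :=
        Finset.card_le_card_of_injOn F hmaps (hinj.injOn)
    _ ≤ ∑ j ∈ Finset.range (α+1), (Finset.powersetCard j (Finset.univ : Finset (Fin D))).card :=
        Finset.card_biUnion_le
    _ = Vball D α := by
        refine Finset.sum_congr rfl fun j _ => ?_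
        rw [Finset.card_powersetCard, Finset.card_univ, Fintype.card_fin]

lemma main_bound [Fintype Ω] {D : ℕ} {T : Type*} [Fintype T]
    (p : Ω → ℝ) (hp0 : ∀ ω, 0 ≤ p ω) (hp1 : ∑ ω, p ω = 1)
    (X : Ω → (Fin D → Bool)) (Y : Ω → T) (A : Ω → (Fin D → Bool))
    (hM : MarkovChain p X Y A) (α : ℕ) :
    condEnt p X Y ≤ 1 + (1 - pr p (fun ω => α < hammingDist (X ω) (A ω))) *
        Real.logb 2 (Vball D α)
      + pr p (fun ω => α < hammingDist (X ω) (A ω)) * D := by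
  classical
  set pa : ℝ := pr p (fun ω => α < hammingDist (X ω) (A ω)) with hpa
  set V : ℝ := (Vball D α : ℝ) with hVdef
  have hV1 : (1:ℝ) ≤ V := by
    rw [hVdef]
    have : 1 ≤ Vball D α := by
      have h0 : (0:ℕ) ∈ Finset.range (α+1) := by simp
      calc 1 = D.choose 0 := by simp
        _ ≤ ∑ j ∈ Finset.range (α + 1), D.choose j :=
          Finset.single_le_sum (fun j _ => Nat.zero_le _) h0
    exact_mod_cast this
  have hVpos : (0:ℝ) < V := lt_of_lt_of_le one_pos hV1
  set β : ℝ := (2*V)⁻¹ with hβ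
  set γ : ℝ := ((2:ℝ)^(D+1))⁻¹ with hγ
  have hβpos : 0 < β := by positivity
  have hγpos : 0 < γ := by positivity
  set r : (Fin D → Bool) → (Fin D → Bool) → ℝ :=
    fun x a => if hammingDist x a ≤ α then β else γ with hr
  have hrpos : ∀ x a, 0 < r x a := by
    intro x a; rw [hr]; dsimp only; split <;> assumption
  set γ0 : ℝ := min β γ with hγ0
  have hγ0pos : 0 < γ0 := lt_min hβpos hγpos
  have hγ0r : ∀ x a, γ0 ≤ r x a := by
    intro x a; rw [hr]; dsimp only; split
    · exact min_le_left _ _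
    · exact min_le_right _ _
  -- sum of r over x is ≤ 1
  have hrsum : ∀ a, ∑ x, r x a ≤ 1 := by
    intro a
    rw [hr]
    dsimp only
    rw [Finset.sum_ite, Finset.sum_const, Finset.sum_const, nsmul_eq_mul, nsmul_eq_mul]
    have h1 : (({x : Fin D → Bool | hammingDist x a ≤ α} : Finset _).card : ℝ) ≤ V := by
      rw [hVdef]; exact_mod_cast hamming_ball_card a α
    have h2 : ((Finset.univ.filter fun x : Fin D → Bool => ¬ hammingDist x a ≤ α).card : ℝ)
        ≤ (2:ℝ)^D := by
      have := Finset.card_filter_le (Finset.univ : Finset (Fin D → Bool))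
        (fun x => ¬ hammingDist x a ≤ α)
      have hcard : Fintype.card (Fin D → Bool) = 2^D := by
        simp [Fintype.card_fun]
      calc ((Finset.univ.filter fun x : Fin D → Bool => ¬ hammingDist x a ≤ α).card : ℝ)
          ≤ (Fintype.card (Fin D → Bool) : ℝ) := by
            exact_mod_cast le_trans this (le_of_eq (Finset.card_univ))
        _ = (2:ℝ)^D := by rw [hcard]; push_cast; ring
    have e1 : V * β = 1/2 := by rw [hβ]; field_simp
    have e2 : (2:ℝ)^D * γ = 1/2 := by
      rw [hγ]; rw [pow_succ]; field_simp
    calc (({x : Fin D → Bool | hammingDist x a ≤ α} : Finset _).card : ℝ) * β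
          + ((Finset.univ.filter fun x : Fin D → Bool => ¬ hammingDist x a ≤ α).card : ℝ) * γ
        ≤ V * β + (2:ℝ)^D * γ := by
          gcongr
      _ = 1 := by rw [e1, e2]; norm_num
  -- distributions
  set f : (Fin D → Bool) → T → ℝ := fun x y => pr p (fun ω => X ω = x ∧ Y ω = y) with hfdef
  set g : T → ℝ := fun y => pr p (fun ω => Y ω = y) with hgdef
  set q : (Fin D → Bool) → T → ℝ := fun a y => pr p (fun ω => A ω = a ∧ Y ω = y) with hqdef
  set tt : (Fin D → Bool) → T → (Fin D → Bool) → ℝ :=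
    fun x y a => pr p (fun ω => A ω = a ∧ Y ω = y ∧ X ω = x) with httdef
  set c : (Fin D → Bool) → T → ℝ := fun x y => ∑ a, (q a y / g y) * r x a with hcdef
  have hf0 : ∀ x y, 0 ≤ f x y := fun x y => pr_nonneg hp0 _
  have hg0 : ∀ y, 0 ≤ g y := fun y => pr_nonneg hp0 _
  have hq0 : ∀ a y, 0 ≤ q a y := fun a y => pr_nonneg hp0 _
  have htt0 : ∀ x y a, 0 ≤ tt x y a := fun x y a => pr_nonneg hp0 _
  have hfg : ∀ x y, f x y ≤ g y := fun x y => pr_mono hp0 (fun ω hw => hw.2)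
  have hqg : ∀ a y, q a y ≤ g y := fun a y => pr_mono hp0 (fun ω hw => hw.2)
  have hsum_f : ∀ y, ∑ x, f x y = g y := by
    intro y
    have : ∀ x, f x y = pr p (fun ω => Y ω = y ∧ X ω = x) := by
      intro x; exact pr_congr (fun ω => and_comm)
    rw [Finset.sum_congr rfl (fun x _ => this x)]
    exact pr_fiber X _
  have hsum_h : ∀ y, ∑ a, q a y = g y := by
    intro y
    have : ∀ a, q a y = pr p (fun ω => Y ω = y ∧ A ω = a) := by
      intro a; exact pr_congr (fun ω => and_comm)
    rw [Finset.sum_congr rfl (fun a _ => this a)]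
    exact pr_fiber A _
  have hsum_g : ∑ y, g y = 1 := by
    have : ∀ y, g y = pr p (fun ω => True ∧ Y ω = y) := by
      intro y; exact pr_congr (fun ω => by simp)
    rw [Finset.sum_congr rfl (fun y _ => this y), pr_fiber Y (fun _ => True)]
    simp [pr, hp1]
  have hsum_tt : ∀ x a, ∑ y, tt x y a = pr p (fun ω => A ω = a ∧ X ω = x) := by
    intro x a
    have : ∀ y, tt x y a = pr p (fun ω => (A ω = a ∧ X ω = x) ∧ Y ω = y) := by
      intro y; exact pr_congr (fun ω => by tauto)
    rw [Finset.sum_congr rfl (fun y _ => this y)]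
    exact pr_fiber Y _
  have hgzero : ∀ y, g y = 0 → ∀ a, q a y = 0 := by
    intro y hy a
    exact le_antisymm (hy ▸ hqg a y) (hq0 a y)
  have hwsum : ∀ y, 0 < g y → ∑ a, q a y / g y = 1 := by
    intro y hy
    rw [← Finset.sum_div, hsum_h, div_self (ne_of_gt hy)]
  have hc0 : ∀ x y, 0 ≤ c x y := by
    intro x y
    refine Finset.sum_nonneg fun a _ => mul_nonneg (div_nonneg (hq0 a y) (hg0 y)) ?_
    exact le_of_lt (hrpos x a)
  have hcsum : ∀ y, ∑ x, c x y ≤ 1 := by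
    intro y
    rcases eq_or_lt_of_le (hg0 y) with hy | hy
    · have : ∀ x, c x y = 0 := by
        intro x
        rw [hcdef]
        dsimp only
        refine Finset.sum_eq_zero fun a _ => ?_
        rw [hgzero y hy.symm a]
        simp
      rw [Finset.sum_congr rfl (fun x _ => this x)]
      simp
    · rw [hcdef]
      dsimp only
      rw [Finset.sum_comm]
      calc ∑ a, ∑ x, (q a y / g y) * r x a
          = ∑ a, (q a y / g y) * ∑ x, r x a := by
            refine Finset.sum_congr rfl fun a _ => ?_
            rw [Finset.mul_sum]
        _ ≤ ∑ a, (q a y / g y) * 1 := by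
            refine Finset.sum_le_sum fun a _ => ?_
            exact mul_le_mul_of_nonneg_left (hrsum a) (div_nonneg (hq0 a y) (hg0 y))
        _ = 1 := by
            simp only [mul_one]
            exact hwsum y hy
  have hclb : ∀ x y, 0 < g y → γ0 ≤ c x y := by
    intro x y hy
    calc γ0 = ∑ a, (q a y / g y) * γ0 := by
          rw [← Finset.sum_mul, hwsum y hy, one_mul]
      _ ≤ c x y := by
          refine Finset.sum_le_sum fun a _ => ?_
          exact mul_le_mul_of_nonneg_left (hγ0r x a) (div_nonneg (hq0 a y) (hg0 y))
  -- the paired pmf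
  set fP : ((Fin D → Bool) × T) → ℝ := fun z => pr p (fun ω => (X ω, Y ω) = z) with hfP
  have hfPf : ∀ z : (Fin D → Bool) × T, fP z = f z.1 z.2 := by
    intro z
    exact pr_congr (fun ω => by rw [Prod.ext_iff])
  have hfP0 : ∀ z, 0 ≤ fP z := fun z => pr_nonneg hp0 _
  have hfP1 : ∑ z, fP z = 1 := by
    have : ∀ z : (Fin D → Bool) × T, fP z = pr p (fun ω => True ∧ (X ω, Y ω) = z) :=
      fun z => pr_congr (fun ω => by simp)
    rw [Finset.sum_congr rfl (fun z _ => this z), pr_fiber (fun ω => (X ω, Y ω)) (fun _ => True)]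
    simp [pr, hp1]
  set CP : ((Fin D → Bool) × T) → ℝ := fun z => g z.2 * c z.1 z.2 with hCP
  have hCP0 : ∀ z, 0 ≤ CP z := fun z => mul_nonneg (hg0 _) (hc0 _ _)
  have hCP1 : ∑ z, CP z ≤ 1 := by
    rw [hCP]
    dsimp only
    rw [Fintype.sum_prod_type, Finset.sum_comm]
    calc ∑ y, ∑ x, g y * c x y = ∑ y, g y * ∑ x, c x y := by
          refine Finset.sum_congr rfl fun y _ => ?_
          rw [Finset.mul_sum]
      _ ≤ ∑ y, g y := by
          refine Finset.sum_le_sum fun y _ => ?_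
          exact mul_le_of_le_one_right (hg0 y) (hcsum y)
      _ = 1 := hsum_g
  have hCPpos : ∀ z, 0 < fP z → 0 < CP z := by
    intro z hz
    rw [hfPf] at hz
    have hgy : 0 < g z.2 := lt_of_lt_of_le hz (hfg z.1 z.2)
    exact mul_pos hgy (lt_of_lt_of_le hγ0pos (hclb z.1 z.2 hgy))
  have gibbs_ineq := gibbs fP CP hfP0 hfP1 hCP1 hCPpos hCP0
  have hlog2 : (0:ℝ) < Real.log 2 := Real.log_pos one_lt_two
  have hce : condEnt p X Y * Real.log 2
      = (∑ z, Real.negMulLog (fP z)) - ∑ y, Real.negMulLog (g y) := by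
    rw [condEnt, ent, ent, ← Finset.sum_div, ← Finset.sum_div, div_sub_div_same,
      div_mul_cancel₀ _ (ne_of_gt hlog2)]
  have hstep1 : ∑ y, Real.negMulLog (g y)
      = - ∑ z : (Fin D → Bool) × T, fP z * Real.log (g z.2) := by
    have e : ∑ z : (Fin D → Bool) × T, fP z * Real.log (g z.2)
        = ∑ y, g y * Real.log (g y) := by
      rw [Fintype.sum_prod_type, Finset.sum_comm]
      refine Finset.sum_congr rfl fun y _ => ?_
      simp only
      rw [← Finset.sum_mul]
      congr 1
      rw [← hsum_f y]
      exact Finset.sum_congr rfl fun x _ => hfPf (x, y)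
    rw [e]
    unfold Real.negMulLog
    rw [← Finset.sum_neg_distrib]
    exact Finset.sum_congr rfl fun y _ => by ring
  have hkey1 : condEnt p X Y * Real.log 2
      ≤ ∑ z : (Fin D → Bool) × T, fP z * (- Real.log (c z.1 z.2)) := by
    rw [hce, hstep1]
    have hsplit : ∀ z : (Fin D → Bool) × T,
        fP z * (- Real.log (CP z)) + fP z * Real.log (g z.2)
          = fP z * (- Real.log (c z.1 z.2)) := by
      intro z
      rcases eq_or_lt_of_le (hfP0 z) with h | h
      · rw [← h]; ring
      · have hgy : 0 < g z.2 := lt_of_lt_of_le (hfPf z ▸ h) (hfg z.1 z.2)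
        have hcy : 0 < c z.1 z.2 := lt_of_lt_of_le hγ0pos (hclb z.1 z.2 hgy)
        rw [hCP]
        dsimp only
        rw [Real.log_mul (ne_of_gt hgy) (ne_of_gt hcy)]
        ring
    calc (∑ z, Real.negMulLog (fP z)) - - ∑ z, fP z * Real.log (g z.2)
        ≤ (∑ z, fP z * (- Real.log (CP z))) + ∑ z, fP z * Real.log (g z.2) := by
          linarith [gibbs_ineq]
      _ = ∑ z, (fP z * (- Real.log (CP z)) + fP z * Real.log (g z.2)) :=
          (Finset.sum_add_distrib).symm
      _ = ∑ z, fP z * (- Real.log (c z.1 z.2)) :=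
          Finset.sum_congr rfl fun z _ => hsplit z
  have hjensen : ∀ x y, f x y * (- Real.log (c x y))
      ≤ ∑ a, tt x y a * (- Real.log (r x a)) := by
    intro x y
    rcases eq_or_lt_of_le (hf0 x y) with h | h
    · have htt : ∀ a, tt x y a = 0 := by
        intro a
        refine le_antisymm ?_ (htt0 x y a)
        calc tt x y a ≤ f x y := pr_mono hp0 (fun ω hw => ⟨hw.2.2, hw.2.1⟩)
          _ = 0 := h.symm
      rw [← h]
      simp [htt]
    · have hgy : 0 < g y := lt_of_lt_of_le h (hfg x y)
      have hmark : ∀ a, tt x y a = f x y * (q a y / g y) := by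
        intro a
        have hM' := hM x y a h
        have : tt x y a * g y = q a y * f x y := hM'
        field_simp
        linear_combination this
      have hcon := (strictConcaveOn_log_Ioi.concaveOn).le_map_sum
        (t := Finset.univ) (w := fun a => q a y / g y) (p := fun a => r x a)
        (fun a _ => div_nonneg (hq0 a y) (hg0 y)) (hwsum y hgy)
        (fun a _ => Set.mem_Ioi.mpr (hrpos x a))
      simp only [smul_eq_mul] at hcon
      have hcz : c x y = ∑ a, (q a y / g y) * r x a := by rw [hcdef]
      have h1 : - Real.log (c x y) ≤ ∑ a, (q a y / g y) * (- Real.log (r x a)) := by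
        have h2 := neg_le_neg hcon
        rw [← hcz] at h2
        calc - Real.log (c x y) ≤ - ∑ a, (q a y / g y) * Real.log (r x a) := h2
          _ = ∑ a, (q a y / g y) * (- Real.log (r x a)) := by
            rw [← Finset.sum_neg_distrib]
            exact Finset.sum_congr rfl fun a _ => by ring
      calc f x y * (- Real.log (c x y))
          ≤ f x y * ∑ a, (q a y / g y) * (- Real.log (r x a)) :=
            mul_le_mul_of_nonneg_left h1 (le_of_lt h)
        _ = ∑ a, (f x y * (q a y / g y)) * (- Real.log (r x a)) := by
            rw [Finset.mul_sum]
            exact Finset.sum_congr rfl fun a _ => by ring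
        _ = ∑ a, tt x y a * (- Real.log (r x a)) :=
            Finset.sum_congr rfl fun a _ => by rw [hmark a]
  have hkey2 : ∑ z : (Fin D → Bool) × T, fP z * (- Real.log (c z.1 z.2))
      ≤ ∑ x, ∑ a, pr p (fun ω => A ω = a ∧ X ω = x) * (- Real.log (r x a)) := by
    calc ∑ z : (Fin D → Bool) × T, fP z * (- Real.log (c z.1 z.2))
        = ∑ x, ∑ y, f x y * (- Real.log (c x y)) := by
          rw [Fintype.sum_prod_type]
          exact Finset.sum_congr rfl fun x _ => Finset.sum_congr rfl fun y _ => by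
            rw [hfPf (x,y)]
      _ ≤ ∑ x, ∑ y, ∑ a, tt x y a * (- Real.log (r x a)) :=
          Finset.sum_le_sum fun x _ => Finset.sum_le_sum fun y _ => hjensen x y
      _ = ∑ x, ∑ a, (∑ y, tt x y a) * (- Real.log (r x a)) := by
          refine Finset.sum_congr rfl fun x _ => ?_
          rw [Finset.sum_comm]
          exact Finset.sum_congr rfl fun a _ => (Finset.sum_mul _ _ _).symm
      _ = _ := by
          refine Finset.sum_congr rfl fun x _ => Finset.sum_congr rfl fun a _ => ?_
          rw [hsum_tt x a]
  set L1 : ℝ := Real.log (2*V) with hL1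
  set L2 : ℝ := Real.log ((2:ℝ)^(D+1)) with hL2
  have hrlog : ∀ x a, - Real.log (r x a)
      = if hammingDist x a ≤ α then L1 else L2 := by
    intro x a
    rw [hr]; dsimp only; split
    · rw [hL1, hβ, Real.log_inv]; ring
    · rw [hL2, hγ, Real.log_inv]; ring
  have hfinal1 : ∑ x, ∑ a, pr p (fun ω => A ω = a ∧ X ω = x) * (- Real.log (r x a))
      = (1 - pa) * L1 + pa * L2 := by
    have e1 : ∀ (x a : Fin D → Bool), pr p (fun ω => A ω = a ∧ X ω = x)
        = pr p (fun ω => (X ω, A ω) = (x, a)) := by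
      intro x a; exact pr_congr (fun ω => by rw [Prod.ext_iff]; tauto)
    calc ∑ x, ∑ a, pr p (fun ω => A ω = a ∧ X ω = x) * (- Real.log (r x a))
        = ∑ z : (Fin D → Bool) × (Fin D → Bool), pr p (fun ω => (X ω, A ω) = z) *
            (if hammingDist z.1 z.2 ≤ α then L1 else L2) := by
          rw [Fintype.sum_prod_type]
          exact Finset.sum_congr rfl fun x _ => Finset.sum_congr rfl fun a _ => by
            rw [e1 x a, hrlog x a]
      _ = ∑ ω, p ω * (if hammingDist (X ω) (A ω) ≤ α then L1 else L2) :=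
          sum_pr_mul (fun ω => (X ω, A ω))
            (fun z => if hammingDist z.1 z.2 ≤ α then L1 else L2)
      _ = L1 * pr p (fun ω => ¬ α < hammingDist (X ω) (A ω)) + L2 * pa := by
          rw [hpa]
          unfold pr
          rw [Finset.mul_sum, Finset.mul_sum, ← Finset.sum_add_distrib]
          refine Finset.sum_congr rfl fun ω _ => ?_
          by_cases hd : hammingDist (X ω) (A ω) ≤ α
          · simp [hd, not_lt.mpr hd, mul_comm]
          · simp [hd, not_le.mp hd, mul_comm]
      _ = (1 - pa) * L1 + pa * L2 := by
          have hcompl := pr_add_compl hp1 (fun ω => α < hammingDist (X ω) (A ω))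
          rw [← hpa] at hcompl
          have h2 : pr p (fun ω => ¬ α < hammingDist (X ω) (A ω)) = 1 - pa := by
            linarith
          rw [h2]; ring
  have hmain : condEnt p X Y * Real.log 2 ≤ (1 - pa) * L1 + pa * L2 := by
    calc condEnt p X Y * Real.log 2
        ≤ ∑ z : (Fin D → Bool) × T, fP z * (- Real.log (c z.1 z.2)) := hkey1
      _ ≤ ∑ x, ∑ a, pr p (fun ω => A ω = a ∧ X ω = x) * (- Real.log (r x a)) := hkey2
      _ = (1 - pa) * L1 + pa * L2 := hfinal1
  have hL1e : L1 = Real.log 2 + Real.log V := by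
    rw [hL1, Real.log_mul two_ne_zero (ne_of_gt hVpos)]
  have hL2e : L2 = ((D:ℝ)+1) * Real.log 2 := by
    rw [hL2, Real.log_pow]; push_cast; ring
  rw [← mul_le_mul_iff_left₀ hlog2]
  calc condEnt p X Y * Real.log 2 ≤ (1 - pa) * L1 + pa * L2 := hmain
    _ = (1 + (1 - pa) * Real.logb 2 V + pa * D) * Real.log 2 := by
        rw [hL1e, hL2e, ← Real.log_div_log]
        field_simp
        ring


/-- Main theorem (Theorem 1): with the Markov chain `X → Y → A`, `X, A` valued in `{0,1}^D`,
`E_α` the indicator that the Hamming distance between `X` and `A` exceeds `α`, and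
`p_α = P(E_α = 1)`, if `D > log₂ V(α)` then
`p_α ≥ (H(X) - I(X;Y) - 1 - log₂ V(α)) / (D - log₂ V(α))`. -/
theorem stmt12 [Fintype Ω] {D : ℕ} {T : Type*} [Fintype T]
    (p : Ω → ℝ) (hp : IsPMF p)
    (X : Ω → (Fin D → Bool)) (Y : Ω → T) (A : Ω → (Fin D → Bool))
    (hM : MarkovChain p X Y A) (α : ℕ) (hα : α < D)
    (pα : ℝ) (hpα : pα = pr p (fun ω => α < hammingDist (X ω) (A ω)))
    (hD : Real.logb 2 (Vball D α) < D) :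
    (ent p X - mutInf p X Y - 1 - Real.logb 2 (Vball D α)) /
        ((D : ℝ) - Real.logb 2 (Vball D α)) ≤ pα := by

  obtain ⟨hp0, hp1⟩ := hp
  have hmb := main_bound p hp0 hp1 X Y A hM α
  rw [← hpα] at hmb
  have hDL : 0 < (D:ℝ) - Real.logb 2 (Vball D α) := sub_pos.mpr hD
  rw [div_le_iff₀ hDL]
  have h2 : ent p X - mutInf p X Y = condEnt p X Y := by
    rw [mutInf, condEnt]
    ring
  rw [h2]
  ring_nf at hmb ⊢
  linarith
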